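/- Let φ : ℝ⁴ → ℝ be smooth, with coordinates (t, x, y, z) and Minkowski metric η = diag(−1, 1, 1, 1) used to raise indices; write (∂φ)² = η^{μν} ∂_μφ ∂_νφ and □φ = η^{μν} ∂_μ∂_νφ. Consider the second-order Lagrangian L = −½ φ (∂φ)² □φ and its Euler–Lagrange expression computed by the standard second-order formula E[φ] = (∂L/∂φ)[φ] − ∂_μ( (∂L/∂φ_{,μ})[φ] ) + ∂_μ∂_ν( (∂L/∂φ_{,μν})[φ] ). Then, as smooth functions on ℝ⁴, E[φ] = φ( (□φ)² − (∂^μ∂^νφ)(∂_μ∂_νφ) ) − 2 (∂_μ∂_νφ)(∂^μφ)(∂^νφ). -/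

import Mathlib

open scoped BigOperators

noncomputable section

/-- Partial derivative of a function on `ℝ⁴` in the coordinate direction `μ`. -/
def pd (μ : Fin 4) (f : (Fin 4 → ℝ) → ℝ) : (Fin 4 → ℝ) → ℝ :=
  fun x => fderiv ℝ f x (Pi.single μ 1)

/-- The (inverse) Minkowski metric `diag(−1,1,1,1)` (diagonal entries). -/
def η : Fin 4 → ℝ := fun μ => if μ = 0 then -1 else 1

/-- The second-order jet space of a scalar field on `ℝ⁴`:
the variables `(φ, φ_{,μ}, φ_{,μν})`. -/
abbrev Jet2 := ℝ × (Fin 4 → ℝ) × (Fin 4 → Fin 4 → ℝ)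

/-- The second-order jet prolongation of a scalar field `φ`. -/
def jet2 (φ : (Fin 4 → ℝ) → ℝ) (x : Fin 4 → ℝ) : Jet2 :=
  (φ x, fun μ => pd μ φ x, fun μ ν => pd μ (pd ν φ) x)

/-- Symmetrized direction for `∂/∂φ_{,μν}`, so that
`∂φ_{,ρσ}/∂φ_{,μν} = δ^{(μ}_ρ δ^{ν)}_σ`. -/
def esym (μ ν : Fin 4) : Fin 4 → Fin 4 → ℝ :=
  fun ρ σ => (1 / 2 : ℝ) *
    ((if ρ = μ ∧ σ = ν then (1 : ℝ) else 0) + (if ρ = ν ∧ σ = μ then (1 : ℝ) else 0))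

/-- The Euler–Lagrange expression of a second-order scalar Lagrangian `Λ` along `φ`,
computed by the standard second-order formula
`E[φ] = (∂Λ/∂φ)[φ] − ∂_μ((∂Λ/∂φ_{,μ})[φ]) + ∂_μ∂_ν((∂Λ/∂φ_{,μν})[φ])`. -/
def ELscalar (Λ : Jet2 → ℝ) (φ : (Fin 4 → ℝ) → ℝ) : (Fin 4 → ℝ) → ℝ :=
  fun x =>
    fderiv ℝ Λ (jet2 φ x) ((1 : ℝ), 0, 0)
    - (∑ μ : Fin 4, pd μ (fun y => fderiv ℝ Λ (jet2 φ y) ((0 : ℝ), Pi.single μ 1, 0)) x)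
    + ∑ μ : Fin 4, ∑ ν : Fin 4,
        pd μ (pd ν (fun y => fderiv ℝ Λ (jet2 φ y) ((0 : ℝ), 0, esym μ ν))) x

/-- The Horndeski-type scalar Lagrangian `L = −½ φ (∂φ)² □φ` as a jet function,
with `(∂φ)² = η^{μν}φ_{,μ}φ_{,ν}` and `□φ = η^{μν}φ_{,μν}`. -/
def Lscal : Jet2 → ℝ :=
  fun w => -(1 / 2 : ℝ) * w.1 * (∑ μ : Fin 4, η μ * w.2.1 μ * w.2.1 μ) *
    (∑ μ : Fin 4, η μ * w.2.2 μ μ)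

/-! ### Auxiliary material -/

abbrev V4 := Fin 4 → ℝ

lemma diff_top {f : V4 → ℝ} (hf : ContDiff ℝ (⊤:ℕ∞) f) : Differentiable ℝ f :=
  hf.differentiable (by simp)

lemma pd_smooth {f : V4 → ℝ} (hf : ContDiff ℝ (⊤:ℕ∞) f) (μ : Fin 4) :
    ContDiff ℝ (⊤:ℕ∞) (pd μ f) := by
  have h1 : ContDiff ℝ (⊤:ℕ∞) (fderiv ℝ f) := hf.fderiv_right (by exact_mod_cast le_rfl)
  exact h1.clm_apply contDiff_const

lemma pd_mul {f g : V4 → ℝ} {x : V4} (hf : DifferentiableAt ℝ f x)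
    (hg : DifferentiableAt ℝ g x) (μ : Fin 4) :
    pd μ (fun y => f y * g y) x = pd μ f x * g x + f x * pd μ g x := by
  simp only [pd, fderiv_fun_mul hf hg, ContinuousLinearMap.add_apply,
    ContinuousLinearMap.smul_apply, smul_eq_mul]
  ring

lemma pd_add {f g : V4 → ℝ} {x : V4} (hf : DifferentiableAt ℝ f x)
    (hg : DifferentiableAt ℝ g x) (μ : Fin 4) :
    pd μ (fun y => f y + g y) x = pd μ f x + pd μ g x := by
  simp [pd, fderiv_fun_add hf hg]

lemma pd_const_mul {f : V4 → ℝ} {x : V4} (hf : DifferentiableAt ℝ f x) (c : ℝ) (μ : Fin 4) :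
    pd μ (fun y => c * f y) x = c * pd μ f x := by
  simp [pd, fderiv_const_mul hf c]

lemma pd_neg {f : V4 → ℝ} {x : V4} (μ : Fin 4) :
    pd μ (fun y => -(f y)) x = -(pd μ f x) := by
  simp [pd, fderiv_neg]

lemma pd_sum {f : Fin 4 → V4 → ℝ} {x : V4} (hf : ∀ i, DifferentiableAt ℝ (f i) x) (μ : Fin 4) :
    pd μ (fun y => ∑ i : Fin 4, f i y) x = ∑ i : Fin 4, pd μ (f i) x := by
  simp [pd, fderiv_fun_sum (fun i _ => hf i)]

lemma pd_comm {f : V4 → ℝ} (hf : ContDiff ℝ (⊤:ℕ∞) f) (μ ν : Fin 4) (x : V4) :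
    pd μ (pd ν f) x = pd ν (pd μ f) x := by
  have hdf : ContDiff ℝ (⊤:ℕ∞) (fderiv ℝ f) := hf.fderiv_right (by exact_mod_cast le_rfl)
  have key : ∀ (a b : Fin 4),
      pd a (pd b f) x = fderiv ℝ (fderiv ℝ f) x (Pi.single a 1) (Pi.single b 1) := by
    intro a b
    have h : pd b f = fun y => (fderiv ℝ f y) (Pi.single b 1) := rfl
    rw [pd, h, fderiv_clm_apply (hdf.differentiable (by simp) x)
      (differentiableAt_const _)]
    simp
  rw [key, key]
  have hsymm : IsSymmSndFDerivAt ℝ f x := by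
    apply ContDiffAt.isSymmSndFDerivAt (n := ((⊤:ℕ∞) : WithTop ℕ∞)) hf.contDiffAt
    rw [minSmoothness_of_isRCLikeNormedField]; exact WithTop.coe_le_coe.mpr le_top
  exact hsymm _ _

/-! ### The derivative of `Lscal` -/

def Q0 : Jet2 →L[ℝ] ℝ := ContinuousLinearMap.fst ℝ ℝ _
def Q1 (μ : Fin 4) : Jet2 →L[ℝ] ℝ :=
  (ContinuousLinearMap.proj μ).comp
    ((ContinuousLinearMap.fst ℝ _ _).comp (ContinuousLinearMap.snd ℝ ℝ _))
def Q2 (μ ν : Fin 4) : Jet2 →L[ℝ] ℝ :=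
  ((ContinuousLinearMap.proj ν).comp
      (ContinuousLinearMap.proj μ (φ := fun _ : Fin 4 => Fin 4 → ℝ))).comp
    ((ContinuousLinearMap.snd ℝ _ _).comp (ContinuousLinearMap.snd ℝ ℝ _))

lemma Q0_apply (v : Jet2) : Q0 v = v.1 := rfl
lemma Q1_apply (μ : Fin 4) (v : Jet2) : Q1 μ v = v.2.1 μ := rfl
lemma Q2_apply (μ ν : Fin 4) (v : Jet2) : Q2 μ ν v = v.2.2 μ ν := rfl

lemma hQ0 (w : Jet2) : HasFDerivAt (fun w : Jet2 => w.1) Q0 w := Q0.hasFDerivAt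
lemma hQ1 (μ : Fin 4) (w : Jet2) : HasFDerivAt (fun w : Jet2 => w.2.1 μ) (Q1 μ) w :=
  (Q1 μ).hasFDerivAt
lemma hQ2 (μ ν : Fin 4) (w : Jet2) : HasFDerivAt (fun w : Jet2 => w.2.2 μ ν) (Q2 μ ν) w :=
  (Q2 μ ν).hasFDerivAt

lemma hasFDerivAt_Lscal (w : Jet2) :
    HasFDerivAt Lscal
      ((-(1/2:ℝ) * w.1 * (∑ μ : Fin 4, η μ * w.2.1 μ * w.2.1 μ)) • (∑ μ : Fin 4, η μ • Q2 μ μ)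
       + (∑ μ : Fin 4, η μ * w.2.2 μ μ) •
          ((-(1/2:ℝ) * w.1) •
              (∑ μ : Fin 4, ((η μ * w.2.1 μ) • Q1 μ + w.2.1 μ • (η μ • Q1 μ)))
            + (∑ μ : Fin 4, η μ * w.2.1 μ * w.2.1 μ) • ((-(1/2:ℝ)) • Q0))) w := by
  have hA : HasFDerivAt (fun w : Jet2 => ∑ μ : Fin 4, η μ * w.2.1 μ * w.2.1 μ)
      (∑ μ : Fin 4, ((η μ * w.2.1 μ) • Q1 μ + w.2.1 μ • (η μ • Q1 μ))) w :=
    HasFDerivAt.fun_sum fun μ _ => ((hQ1 μ w).const_mul (η μ)).mul (hQ1 μ w)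
  have hB : HasFDerivAt (fun w : Jet2 => ∑ μ : Fin 4, η μ * w.2.2 μ μ)
      (∑ μ : Fin 4, η μ • Q2 μ μ) w :=
    HasFDerivAt.fun_sum fun μ _ => (hQ2 μ μ w).const_mul (η μ)
  exact (((hQ0 w).const_mul (-(1/2:ℝ))).mul hA).mul hB

lemma fderiv_Lscal (w v : Jet2) :
    fderiv ℝ Lscal w v =
      -(1/2 : ℝ) * v.1 * (∑ μ : Fin 4, η μ * w.2.1 μ * w.2.1 μ) * (∑ μ : Fin 4, η μ * w.2.2 μ μ)
      + (-1 : ℝ) * w.1 * (∑ μ : Fin 4, η μ * w.2.1 μ * v.2.1 μ) *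
          (∑ μ : Fin 4, η μ * w.2.2 μ μ)
      + (-(1/2 : ℝ)) * w.1 * (∑ μ : Fin 4, η μ * w.2.1 μ * w.2.1 μ) *
          (∑ μ : Fin 4, η μ * v.2.2 μ μ) := by
  rw [(hasFDerivAt_Lscal w).fderiv]
  simp only [ContinuousLinearMap.add_apply, ContinuousLinearMap.smul_apply,
    ContinuousLinearMap.sum_apply, Q0_apply, Q1_apply, Q2_apply, smul_eq_mul]
  rw [show ∑ x : Fin 4, (η x * w.2.1 x * v.2.1 x + w.2.1 x * (η x * v.2.1 x))
      = 2 * ∑ x : Fin 4, η x * w.2.1 x * v.2.1 x by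
    rw [Finset.mul_sum]; exact Finset.sum_congr rfl fun _ _ => by ring]
  ring

/-! ### `A = (∂φ)²` and `B = □φ` as functions on spacetime -/

def Af (φ : V4 → ℝ) : V4 → ℝ := fun y => ∑ ρ : Fin 4, η ρ * pd ρ φ y * pd ρ φ y
def Bf (φ : V4 → ℝ) : V4 → ℝ := fun y => ∑ ρ : Fin 4, η ρ * pd ρ (pd ρ φ) y

section

variable {φ : V4 → ℝ}

lemma Af_smooth (hφ : ContDiff ℝ (⊤:ℕ∞) φ) : ContDiff ℝ (⊤:ℕ∞) (Af φ) :=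
  ContDiff.sum fun ρ _ =>
    (contDiff_const.mul (pd_smooth hφ ρ)).mul (pd_smooth hφ ρ)

lemma Bf_smooth (hφ : ContDiff ℝ (⊤:ℕ∞) φ) : ContDiff ℝ (⊤:ℕ∞) (Bf φ) :=
  ContDiff.sum fun ρ _ => contDiff_const.mul (pd_smooth (pd_smooth hφ ρ) ρ)

lemma jet2_E0 (y : V4) :
    fderiv ℝ Lscal (jet2 φ y) ((1 : ℝ), 0, 0) = -(1/2 : ℝ) * Af φ y * Bf φ y := by
  rw [fderiv_Lscal]
  simp [jet2, Af, Bf]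

lemma jet2_E1 (μ : Fin 4) (y : V4) :
    fderiv ℝ Lscal (jet2 φ y) ((0 : ℝ), Pi.single μ 1, 0)
      = -(φ y * (η μ * pd μ φ y) * Bf φ y) := by
  rw [fderiv_Lscal]
  simp only [jet2, Pi.single_apply, mul_ite, mul_one, mul_zero, Finset.sum_ite_eq',
    Finset.mem_univ, if_true]
  simp [Af, Bf]
  try ring

lemma jet2_E2 (μ ν : Fin 4) (y : V4) :
    fderiv ℝ Lscal (jet2 φ y) ((0 : ℝ), 0, esym μ ν)
      = if μ = ν then (-(1/2 : ℝ) * η μ) * (φ y * Af φ y) else 0 := by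
  rw [fderiv_Lscal]
  have hsum : (∑ ρ : Fin 4, η ρ * esym μ ν ρ ρ) = if μ = ν then η μ else 0 := by
    by_cases h : μ = ν
    · subst h
      fin_cases μ <;>
        simp (config := { decide := true }) [esym, η, Fin.sum_univ_four] <;> norm_num
    · have : ∀ ρ : Fin 4, η ρ * esym μ ν ρ ρ = 0 := by
        intro ρ
        have h1 : ¬(ρ = μ ∧ ρ = ν) := by rintro ⟨rfl, rfl⟩; exact h rfl
        have h2 : ¬(ρ = ν ∧ ρ = μ) := by rintro ⟨rfl, rfl⟩; exact h rfl
        simp [esym, h1, h2]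
      simp [this, h]
  simp only [jet2] at hsum ⊢
  rw [hsum]
  by_cases h : μ = ν <;> simp [h, Af, Bf] <;> ring

end

/-- **Euler–Lagrange expression of `L = −½ φ (∂φ)² □φ`** (Section 3.6):
`E[φ] = φ((□φ)² − (∂^μ∂^νφ)(∂_μ∂_νφ)) − 2(∂_μ∂_νφ)(∂^μφ)(∂^νφ)`
as smooth functions on `ℝ⁴`. -/
theorem euler_lagrange_of_cubic_horndeski
    (φ : (Fin 4 → ℝ) → ℝ) (hφ : ContDiff ℝ (⊤ : ℕ∞) φ) :
    ∀ x : Fin 4 → ℝ,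
      ELscalar Lscal φ x
      = φ x * ((∑ μ : Fin 4, η μ * pd μ (pd μ φ) x) ^ 2
            - ∑ μ : Fin 4, ∑ ν : Fin 4,
                η μ * η ν * pd μ (pd ν φ) x * pd μ (pd ν φ) x)
        - 2 * ∑ μ : Fin 4, ∑ ν : Fin 4,
            η μ * η ν * pd μ (pd ν φ) x * pd μ φ x * pd ν φ x := by
  intro x
  -- differentiability bookkeeping
  have hp : ∀ μ, ContDiff ℝ (⊤:ℕ∞) (pd μ φ) := fun μ => pd_smooth hφ μ
  have hs : ∀ μ ν, ContDiff ℝ (⊤:ℕ∞) (pd μ (pd ν φ)) := fun μ ν => pd_smooth (hp ν) μ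
  have hA : ContDiff ℝ (⊤:ℕ∞) (Af φ) := Af_smooth hφ
  have hB : ContDiff ℝ (⊤:ℕ∞) (Bf φ) := Bf_smooth hφ
  have dAt : ∀ {f : V4 → ℝ}, ContDiff ℝ (⊤:ℕ∞) f → ∀ z : V4, DifferentiableAt ℝ f z :=
    fun hf z => (diff_top hf) z
  -- first derivative of B
  have hpdB : ∀ (μ : Fin 4) (z : V4),
      pd μ (Bf φ) z = ∑ ρ : Fin 4, η ρ * pd μ (pd ρ (pd ρ φ)) z := by
    intro μ z
    rw [show Bf φ = fun y => ∑ ρ : Fin 4, η ρ * pd ρ (pd ρ φ) y from rfl,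
      pd_sum (fun ρ => dAt (contDiff_const.mul (hs ρ ρ)) z) μ]
    exact Finset.sum_congr rfl fun ρ _ => pd_const_mul (dAt (hs ρ ρ) z) (η ρ) μ
  -- first derivative of A
  have hpdA : ∀ (ν : Fin 4) (z : V4), pd ν (Af φ) z
      = ∑ ρ : Fin 4, η ρ * (pd ν (pd ρ φ) z * pd ρ φ z + pd ρ φ z * pd ν (pd ρ φ) z) := by
    intro ν z
    rw [show Af φ = fun y => ∑ ρ : Fin 4, η ρ * pd ρ φ y * pd ρ φ y from rfl,
      pd_sum (fun ρ => dAt ((contDiff_const.mul (hp ρ)).mul (hp ρ)) z) ν]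
    refine Finset.sum_congr rfl fun ρ _ => ?_
    rw [pd_mul (dAt (contDiff_const.mul (hp ρ)) z) (dAt (hp ρ) z) ν,
      pd_const_mul (dAt (hp ρ) z) (η ρ) ν]
    ring
  -- second derivative of A (diagonal)
  have hpdpdA : ∀ μ : Fin 4, pd μ (pd μ (Af φ)) x
      = ∑ ρ : Fin 4, η ρ * (pd μ (pd μ (pd ρ φ)) x * pd ρ φ x
          + 2 * (pd μ (pd ρ φ) x * pd μ (pd ρ φ) x)
          + pd ρ φ x * pd μ (pd μ (pd ρ φ)) x) := by
    intro μ
    have h1 : pd μ (Af φ) = fun z => ∑ ρ : Fin 4, η ρ *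
        (pd μ (pd ρ φ) z * pd ρ φ z + pd ρ φ z * pd μ (pd ρ φ) z) := funext (hpdA μ)
    rw [h1, pd_sum (fun ρ => dAt (contDiff_const.mul
      (((hs μ ρ).mul (hp ρ)).add ((hp ρ).mul (hs μ ρ)))) x) μ]
    refine Finset.sum_congr rfl fun ρ _ => ?_
    rw [pd_const_mul (dAt (((hs μ ρ).mul (hp ρ)).add ((hp ρ).mul (hs μ ρ))) x) (η ρ) μ,
      pd_add (dAt ((hs μ ρ).mul (hp ρ)) x) (dAt ((hp ρ).mul (hs μ ρ)) x) μ,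
      pd_mul (dAt (hs μ ρ) x) (dAt (hp ρ) x) μ,
      pd_mul (dAt (hp ρ) x) (dAt (hs μ ρ) x) μ]
    ring
  -- derivatives of G = φ·A
  have hpdG : ∀ ν : Fin 4, pd ν (fun y => φ y * Af φ y)
      = fun z => pd ν φ z * Af φ z + φ z * pd ν (Af φ) z :=
    fun ν => funext fun z => pd_mul (dAt hφ z) (dAt hA z) ν
  have hpdpdG : ∀ μ : Fin 4, pd μ (pd μ (fun y => φ y * Af φ y)) x
      = pd μ (pd μ φ) x * Af φ x + 2 * (pd μ φ x * pd μ (Af φ) x)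
        + φ x * pd μ (pd μ (Af φ)) x := by
    intro μ
    rw [hpdG μ,
      pd_add (dAt ((hp μ).mul hA) x) (dAt (hφ.mul (pd_smooth hA μ)) x) μ,
      pd_mul (dAt (hp μ) x) (dAt hA x) μ,
      pd_mul (dAt hφ x) (dAt (pd_smooth hA μ) x) μ]
    ring
  -- evaluation of the three Euler–Lagrange pieces
  have hT2 : ∀ μ : Fin 4,
      pd μ (fun y => fderiv ℝ Lscal (jet2 φ y) ((0:ℝ), Pi.single μ 1, 0)) x
      = -(pd μ φ x * (η μ * pd μ φ x) * Bf φ x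
          + φ x * (η μ * pd μ (pd μ φ) x) * Bf φ x
          + φ x * (η μ * pd μ φ x) * pd μ (Bf φ) x) := by
    intro μ
    have h0 : (fun y => fderiv ℝ Lscal (jet2 φ y) ((0:ℝ), Pi.single μ 1, 0))
        = fun y => -(φ y * (η μ * pd μ φ y) * Bf φ y) := funext fun y => jet2_E1 μ y
    rw [h0, pd_neg,
      pd_mul (dAt (hφ.mul (contDiff_const.mul (hp μ))) x) (dAt hB x) μ,
      pd_mul (dAt hφ x) (dAt (contDiff_const.mul (hp μ)) x) μ,
      pd_const_mul (dAt (hp μ) x) (η μ) μ]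
    ring
  have hT3 : ∀ μ ν : Fin 4,
      pd μ (pd ν (fun y => fderiv ℝ Lscal (jet2 φ y) ((0:ℝ), 0, esym μ ν))) x
      = if μ = ν then (-(1/2:ℝ) * η μ) * pd μ (pd μ (fun y => φ y * Af φ y)) x else 0 := by
    intro μ ν
    have h0 : (fun y => fderiv ℝ Lscal (jet2 φ y) ((0:ℝ), 0, esym μ ν))
        = fun y => if μ = ν then (-(1/2:ℝ) * η μ) * (φ y * Af φ y) else 0 :=
      funext fun y => jet2_E2 μ ν y
    rw [h0]
    by_cases h : μ = ν
    · subst h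
      simp only [eq_self_iff_true, if_true]
      have h1 : pd μ (fun y => (-(1/2:ℝ) * η μ) * (φ y * Af φ y))
          = fun z => (-(1/2:ℝ) * η μ) * pd μ (fun y => φ y * Af φ y) z :=
        funext fun z => pd_const_mul (dAt (hφ.mul hA) z) _ μ
      rw [h1, pd_const_mul (dAt (pd_smooth (hφ.mul hA) μ) x) _ μ]
    · simp only [h, if_false]
      have h1 : pd ν (fun _ : V4 => (0:ℝ)) = fun _ => 0 := funext fun z => by simp [pd]
      rw [h1]
      simp [pd]
  -- assemble
  have hmain : ELscalar Lscal φ x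
      = -(1/2 : ℝ) * Af φ x * Bf φ x
        - (∑ μ : Fin 4, -(pd μ φ x * (η μ * pd μ φ x) * Bf φ x
            + φ x * (η μ * pd μ (pd μ φ) x) * Bf φ x
            + φ x * (η μ * pd μ φ x) * pd μ (Bf φ) x))
        + ∑ μ : Fin 4, (-(1/2:ℝ) * η μ) * pd μ (pd μ (fun y => φ y * Af φ y)) x := by
    unfold ELscalar
    rw [jet2_E0]
    congr 1
    · congr 1
      exact Finset.sum_congr rfl fun μ _ => hT2 μ
    · refine (Finset.sum_congr rfl fun μ _ =>
        Finset.sum_congr rfl fun ν _ => hT3 μ ν).trans ?_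
      refine Finset.sum_congr rfl fun μ _ => ?_
      simp
  rw [hmain]
  -- substitute the explicit derivative formulas
  simp only [hpdpdG, hpdpdA, hpdA, hpdB]
  -- symmetry of third derivatives
  have h3 : ∀ a b : Fin 4, pd a (pd a (pd b φ)) x = pd b (pd a (pd a φ)) x := by
    intro a b
    rw [show pd a (pd b φ) = pd b (pd a φ) from funext (pd_comm hφ a b)]
    exact pd_comm (hp a) a b x
  simp only [Af, Bf, Fin.sum_univ_four]
  rw [h3 0 1, h3 0 2, h3 0 3, h3 1 0, h3 1 2, h3 1 3, h3 2 0, h3 2 1, h3 2 3,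
    h3 3 0, h3 3 1, h3 3 2]
  ring

end
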